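/- Let n ≥ 2 be an integer and let γ₁, …, γₙ ≥ 1 be integers, and assume that it is not the case that n = 2 and γ₁ = γ₂ = 1. Then the quotient of ℤⁿ by the subgroup generated by the elements eᵢ − Σ_{j≠i} γⱼ eⱼ (1 ≤ i ≤ n) is a finite group; in particular it is a torsion group. (This is the assertion that K₀(𝒜_Γ) is a torsion group, hence K₁(𝒜_Γ) = 0, for a free product of finite groups Γ = Γ₁ * ⋯ * Γₙ with |Γᵢ| = γᵢ + 1 satisfying the standing hypotheses.) -/

import Mathlib

/-- The abelian group `⟨e₁, …, eₙ | eᵢ = Σ_{j≠i} γⱼ eⱼ⟩`, i.e. `ℤⁿ` modulo the subgroup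
generated by the elements `eᵢ - Σ_{j≠i} γⱼ eⱼ`. -/
abbrev KGroup (n : ℕ) (γ : Fin n → ℕ) : Type :=
  (Fin n → ℤ) ⧸
    AddSubgroup.closure (Set.range fun i : Fin n =>
      Pi.single i (1 : ℤ) -
        ∑ j : {j : Fin n // j ≠ i}, (γ (j : Fin n) : ℤ) • Pi.single (j : Fin n) (1 : ℤ))

/-- Let `n ≥ 2`, `γᵢ ≥ 1`, not all `γᵢ = 1` when `n = 2`. Then
`ℤⁿ/⟨eᵢ - Σ_{j≠i} γⱼ eⱼ⟩` is finite; in particular it is a torsion group.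
(This is the assertion that `K₀(𝒜_Γ)` is torsion, hence `K₁(𝒜_Γ) = 0`, for a free product
of finite groups `Γ = Γ₁ * ⋯ * Γₙ` with `|Γᵢ| = γᵢ + 1`.) -/
theorem K0_finite_torsion (n : ℕ) (hn : 2 ≤ n) (γ : Fin n → ℕ) (hγ : ∀ i, 1 ≤ γ i)
    (hexc : ¬ (n = 2 ∧ ∀ i, γ i = 1)) :
    Finite (KGroup n γ) ∧ ∀ x : KGroup n γ, ∃ c : ℕ, 0 < c ∧ c • x = 0 := by
  set N : AddSubgroup (Fin n → ℤ) := AddSubgroup.closure (Set.range fun i : Fin n =>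
      Pi.single i (1 : ℤ) -
        ∑ j : {j : Fin n // j ≠ i}, (γ (j : Fin n) : ℤ) • Pi.single (j : Fin n) (1 : ℤ)) with hN
  let mk : (Fin n → ℤ) →+ KGroup n γ := QuotientAddGroup.mk' N
  let x : Fin n → KGroup n γ := fun i => mk (Pi.single i 1)
  have hmk_smul : ∀ (j : Fin n) (m : ℤ), mk (m • Pi.single j (1 : ℤ)) = m • x j :=
    fun j m => map_zsmul mk m _
  let s : KGroup n γ := ∑ j, (γ j : ℤ) • x j
  -- the defining relations
  have hrel : ∀ i, ((γ i : ℤ) + 1) • x i = s := by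
    intro i
    have hmem : (Pi.single i (1 : ℤ) -
        ∑ j : {j : Fin n // j ≠ i}, (γ (j : Fin n) : ℤ) • Pi.single (j : Fin n) (1 : ℤ)) ∈ N := by
      rw [hN]; exact AddSubgroup.subset_closure ⟨i, rfl⟩
    have h0 : x i =
        ∑ j : {j : Fin n // j ≠ i}, (γ (j : Fin n) : ℤ) • x (j : Fin n) := by
      have : mk (Pi.single i (1 : ℤ)) =
          mk (∑ j : {j : Fin n // j ≠ i}, (γ (j : Fin n) : ℤ) • Pi.single (j : Fin n) (1 : ℤ)) := by
        rw [← sub_eq_zero, ← map_sub]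
        exact (QuotientAddGroup.eq_zero_iff _).2 hmem
      rw [map_sum] at this
      simp only [hmk_smul] at this
      exact this
    have hsub : (∑ j : {j : Fin n // j ≠ i}, (γ (j : Fin n) : ℤ) • x (j : Fin n))
        = ∑ j ∈ Finset.univ.erase i, (γ j : ℤ) • x j :=
      (Finset.sum_subtype (p := fun j => j ≠ i) (Finset.univ.erase i)
        (by intro j; simp) (fun j => (γ j : ℤ) • x j)).symm
    have h1 : x i = ∑ j ∈ Finset.univ.erase i, (γ j : ℤ) • x j := by rw [h0, hsub]
    have h2 : s = (γ i : ℤ) • x i + ∑ j ∈ Finset.univ.erase i, (γ j : ℤ) • x j :=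
      (Finset.add_sum_erase _ _ (Finset.mem_univ i)).symm
    rw [add_zsmul, one_zsmul, h2, ← h1]
  -- the determinant-like quantities
  let Q : Fin n → ℤ := fun j => ∏ k ∈ Finset.univ.erase j, ((γ k : ℤ) + 1)
  let P : ℤ := ∏ k, ((γ k : ℤ) + 1)
  have hPQ : ∀ j, ((γ j : ℤ) + 1) * Q j = P := fun j =>
    Finset.mul_prod_erase Finset.univ (fun k => ((γ k : ℤ) + 1)) (Finset.mem_univ j)
  have hQpos : ∀ j, 0 < Q j := fun j =>
    Finset.prod_pos (fun k _ => by positivity)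
  have hPpos : 0 < P := Finset.prod_pos (fun k _ => by positivity)
  have hQP : ∀ j, 2 * Q j ≤ P := by
    intro j
    rw [← hPQ j]
    have h2 : (2 : ℤ) ≤ (γ j : ℤ) + 1 := by
      have := hγ j; omega
    nlinarith [hQpos j]
  -- E > 0
  let E : ℤ := (∑ j, (γ j : ℤ) * Q j) - P
  have hE : E = ((n : ℤ) - 1) * P - ∑ j, Q j := by
    show (∑ j, (γ j : ℤ) * Q j) - P = ((n : ℤ) - 1) * P - ∑ j, Q j
    have h1 : ∑ j, (γ j : ℤ) * Q j = ∑ j, (((γ j : ℤ) + 1) * Q j - Q j) := by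
      apply Finset.sum_congr rfl; intro j _; ring
    rw [h1, Finset.sum_sub_distrib]
    simp only [hPQ, Finset.sum_const, Finset.card_univ, Fintype.card_fin, nsmul_eq_mul]
    ring
  have hEpos : 0 < E := by
    rw [hE]
    rcases Nat.lt_or_ge n 3 with h3 | h3
    · -- n = 2 case
      have hn2 : n = 2 := by omega
      obtain ⟨i, hi⟩ : ∃ i, γ i ≠ 1 := by
        by_contra h; push_neg at h; exact hexc ⟨hn2, h⟩
      have hγi : (3 : ℤ) ≤ (γ i : ℤ) + 1 := by have := hγ i; omega
      have h3Q : 3 * Q i ≤ P := by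
        rw [← hPQ i]; nlinarith [hQpos i]
      have herase : ∑ j ∈ Finset.univ.erase i, 2 * Q j ≤
          ((Finset.univ.erase i).card : ℤ) * P := by
        have := Finset.sum_le_card_nsmul (Finset.univ.erase i) (fun j => 2 * Q j) P
          (fun j _ => hQP j)
        simpa [nsmul_eq_mul] using this
      have hcard : ((Finset.univ.erase i).card : ℤ) = 1 := by
        rw [Finset.card_erase_of_mem (Finset.mem_univ i)]
        simp [hn2]
      have hsplit : ∑ j, Q j = Q i + ∑ j ∈ Finset.univ.erase i, Q j :=
        (Finset.add_sum_erase _ _ (Finset.mem_univ i)).symm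
      have hmul : ∑ j ∈ Finset.univ.erase i, 2 * Q j
          = 2 * ∑ j ∈ Finset.univ.erase i, Q j := (Finset.mul_sum _ _ _).symm
      have hncast : ((n : ℤ) - 1) = 1 := by rw [hn2]; norm_num
      rw [hncast, hsplit]
      rw [hcard, hmul] at herase
      linarith
    · -- n ≥ 3 case
      have h2sum : 2 * ∑ j, Q j ≤ (n : ℤ) * P := by
        calc 2 * ∑ j, Q j = ∑ j, 2 * Q j := Finset.mul_sum _ _ _
          _ ≤ ∑ _j : Fin n, P := Finset.sum_le_sum (fun j _ => hQP j)
          _ = (n : ℤ) * P := by simp [mul_comm]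
      have hn3 : (3 : ℤ) ≤ (n : ℤ) := by exact_mod_cast h3
      nlinarith
  -- the key torsion relation
  have hsE : E • s = 0 := by
    have hPs : P • s = (∑ j, (γ j : ℤ) * Q j) • s := by
      calc P • s = ∑ j, P • ((γ j : ℤ) • x j) := Finset.smul_sum (r := P) (f := fun j => (γ j : ℤ) • x j) (s := Finset.univ)
        _ = ∑ j, ((γ j : ℤ) * Q j) • (((γ j : ℤ) + 1) • x j) := by
            apply Finset.sum_congr rfl
            intro j _
            rw [← mul_zsmul, ← mul_zsmul, ← hPQ j]
            congr 1
            ring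
        _ = ∑ j, ((γ j : ℤ) * Q j) • s := by
            apply Finset.sum_congr rfl; intro j _; rw [hrel]
        _ = (∑ j, (γ j : ℤ) * Q j) • s := Finset.sum_smul.symm
    have h1 : E • s = (∑ j, (γ j : ℤ) * Q j) • s - P • s := sub_smul _ _ _
    rw [h1, hPs, sub_self]
  -- each generator is killed by P * E
  have hkill : ∀ i, (P * E) • x i = 0 := by
    intro i
    have h1 : (P * E) • x i = (Q i * E) • (((γ i : ℤ) + 1) • x i) := by
      rw [← mul_zsmul, ← hPQ i]
      congr 1
      ring
    rw [h1, hrel, mul_zsmul, hsE, smul_zero]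
  set c : ℕ := (P * E).toNat with hc
  have hcPE : (c : ℤ) = P * E := Int.toNat_of_nonneg (mul_pos hPpos hEpos).le
  have hcpos : 0 < c := by
    have : (0 : ℤ) < (c : ℤ) := hcPE ▸ mul_pos hPpos hEpos
    exact_mod_cast this
  -- c kills everything
  have hmkv : ∀ v : Fin n → ℤ, mk v = ∑ i, v i • x i := by
    intro v
    have hv : v = ∑ i, Pi.single i (v i) := by
      funext k
      rw [Finset.sum_apply]
      simp [Pi.single_apply]
    have hsingle : ∀ i : Fin n, Pi.single i (v i) = (v i • Pi.single i (1 : ℤ) : Fin n → ℤ) := by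
      intro i
      funext k
      by_cases h : k = i <;> simp [Pi.single_apply, h]
    calc mk v = ∑ i, mk (Pi.single i (v i)) := by conv_lhs => rw [hv, map_sum]
      _ = ∑ i, v i • x i := by
          apply Finset.sum_congr rfl
          intro i _
          rw [hsingle i, hmk_smul]
  have hckill : ∀ a : KGroup n γ, (c : ℤ) • a = 0 := by
    intro a
    obtain ⟨v, rfl⟩ := QuotientAddGroup.mk'_surjective N a
    calc (c : ℤ) • (QuotientAddGroup.mk' N) v = ∑ i, (c : ℤ) • (v i • x i) := by
          rw [show (QuotientAddGroup.mk' N) v = mk v from rfl, hmkv, Finset.smul_sum (r := (c : ℤ)) (f := fun i => v i • x i) (s := Finset.univ)]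
      _ = 0 := by
          apply Finset.sum_eq_zero
          intro i _
          rw [smul_comm, hcPE, hkill, smul_zero]
  constructor
  · -- finiteness via a surjection from (Fin n → ZMod c)
    haveI : NeZero c := ⟨hcpos.ne'⟩
    apply Finite.of_surjective (fun w : Fin n → ZMod c => ∑ i, ((w i).val : ℤ) • x i)
    intro a
    obtain ⟨v, rfl⟩ := QuotientAddGroup.mk'_surjective N a
    refine ⟨fun i => (v i : ZMod c), ?_⟩
    rw [show (QuotientAddGroup.mk' N) v = mk v from rfl, hmkv]
    apply Finset.sum_congr rfl
    intro i _
    have hmod : (c : ℤ) ∣ (((v i : ZMod c).val : ℤ) - v i) := by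
      have h0 : ((((v i : ZMod c).val : ℤ) - v i : ℤ) : ZMod c) = 0 := by
        push_cast
        simp [ZMod.natCast_val, ZMod.intCast_cast]
      exact (ZMod.intCast_zmod_eq_zero_iff_dvd _ _).1 h0
    obtain ⟨k, hk⟩ := hmod
    have hval : ((v i : ZMod c).val : ℤ) = v i + c * k := by linarith
    rw [hval, add_zsmul, mul_zsmul, hckill, add_zero]
  · intro a
    exact ⟨c, hcpos, by rw [← natCast_zsmul]; exact hckill a⟩
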